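/- arXiv:1807.04627 — 10 statements merged into one kernel-verified Lean document; each statement's English description precedes it below -/
import Mathlib

section
/- The function ũ(x,y) = Σ_{j=0}^{⌊n/2⌋} (-1)^j · [n!·(m-1)!·∏_{k=0}^{j}(m+3k) / ((m+3j+2)!·(n-2j)!)] · y^{m+3j+2} · x^{n-2j} satisfies the inhomogeneous Tricomi equation y·ũ_xx + ũ_yy = x^n · y^m for all real x, y. -/
noncomputable def tc (n m j : ℕ) : ℝ :=
  (-1 : ℝ) ^ j *
    ((n.factorial : ℝ) * ((m - 1).factorial : ℝ) *
        (∏ k ∈ Finset.range (j + 1), ((m + 3 * k : ℕ) : ℝ)) /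
      (((m + 3 * j + 2).factorial : ℝ) * ((n - 2 * j).factorial : ℝ)))

lemma deriv_sum_pow (s : Finset ℕ) (c : ℕ → ℝ) (e : ℕ → ℕ) :
    deriv (fun t : ℝ => ∑ j ∈ s, c j * t ^ e j)
      = fun t => ∑ j ∈ s, c j * ((e j : ℝ) * t ^ (e j - 1)) := by
  funext x
  rw [deriv_fun_sum (fun i _ => ((differentiable_pow (e i)).const_mul (c i)).differentiableAt)]
  refine Finset.sum_congr rfl fun j _ => ?_
  rw [deriv_const_mul _ ((differentiable_pow (e j)).differentiableAt), deriv_pow_field]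

lemma deriv2_sum_pow (s : Finset ℕ) (c : ℕ → ℝ) (e : ℕ → ℕ) (x : ℝ) :
    deriv (deriv (fun t : ℝ => ∑ j ∈ s, c j * t ^ e j)) x
      = ∑ j ∈ s, c j * ((e j : ℝ) * (((e j - 1 : ℕ) : ℝ) * x ^ (e j - 2))) := by
  rw [deriv_sum_pow]
  have : (fun t : ℝ => ∑ j ∈ s, c j * ((e j : ℝ) * t ^ (e j - 1)))
      = fun t : ℝ => ∑ j ∈ s, (c j * (e j : ℝ)) * t ^ (e j - 1) := by
    funext t; exact Finset.sum_congr rfl fun j _ => by ring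
  rw [this, deriv_sum_pow]
  refine Finset.sum_congr rfl fun j _ => ?_
  rw [Nat.sub_sub]
  ring

lemma fac3 (a : ℕ) : ((a + 3).factorial : ℝ)
    = ((a : ℝ) + 3) * (((a : ℝ) + 2) * (((a : ℝ) + 1) * (a.factorial : ℝ))) := by
  rw [show a + 3 = (a + 2) + 1 from rfl, Nat.factorial_succ,
    show a + 2 = (a + 1) + 1 from rfl, Nat.factorial_succ, Nat.factorial_succ]
  push_cast; ring

lemma tc_key (n m j : ℕ) (h : 2 * (j + 1) ≤ n) :
    tc n m j * ((n - 2 * j : ℕ) : ℝ) * ((n - 2 * j - 1 : ℕ) : ℝ)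
      + tc n m (j + 1) * ((m + 3 * j + 5 : ℕ) : ℝ) * ((m + 3 * j + 4 : ℕ) : ℝ) = 0 := by
  obtain ⟨k, hk⟩ : ∃ k, n - 2 * j = k + 2 := ⟨n - 2 * j - 2, by omega⟩
  have hk2 : n - 2 * (j + 1) = k := by omega
  have hk1 : n - 2 * j - 1 = k + 1 := by omega
  unfold tc
  rw [hk, hk2, show k + 2 - 1 = k + 1 from rfl,
    Finset.prod_range_succ (fun k => ((m + 3 * k : ℕ) : ℝ)) (j + 1)]
  have hfk2 : ((k + 2).factorial : ℝ) = ((k : ℝ) + 2) * (((k : ℝ) + 1) * (k.factorial : ℝ)) := by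
    rw [show k + 2 = (k + 1) + 1 from rfl, Nat.factorial_succ, Nat.factorial_succ]
    push_cast; ring
  have hje : m + 3 * (j + 1) + 2 = (m + 3 * j + 2) + 3 := by ring
  rw [hje, fac3, hfk2]
  have h1 : ((m + 3 * j + 2).factorial : ℝ) ≠ 0 := by positivity
  have h2 : (k.factorial : ℝ) ≠ 0 := by positivity
  have h3 : ((k : ℝ) + 2) ≠ 0 := by positivity
  have h4 : ((k : ℝ) + 1) ≠ 0 := by positivity
  have h5 : ((m : ℝ) + 3 * (j : ℝ) + 2 + 3) ≠ 0 := by positivity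
  have h6 : ((m : ℝ) + 3 * (j : ℝ) + 2 + 2) ≠ 0 := by positivity
  have h7 : ((m : ℝ) + 3 * (j : ℝ) + 2 + 1) ≠ 0 := by positivity
  push_cast
  field_simp
  ring

lemma tc_zero (n m : ℕ) (hm : 1 ≤ m) :
    tc n m 0 * (((m + 2 : ℕ) : ℝ) * ((m + 1 : ℕ) : ℝ)) = 1 := by
  unfold tc
  have hmf : ((m - 1).factorial : ℝ) * (m : ℝ) = (m.factorial : ℝ) := by
    rw [show m = (m - 1) + 1 by omega, Nat.factorial_succ]
    push_cast [show m - 1 + 1 = m by omega]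
    ring
  have hm2 : ((m + 2).factorial : ℝ)
      = ((m : ℝ) + 2) * (((m : ℝ) + 1) * (m.factorial : ℝ)) := by
    rw [show m + 2 = (m + 1) + 1 from rfl, Nat.factorial_succ, Nat.factorial_succ]
    push_cast; ring
  simp only [Finset.prod_range_one, pow_zero, Nat.mul_zero, Nat.add_zero, Nat.sub_zero]
  rw [show m + 3 * 0 + 2 = m + 2 from by ring, hm2]
  have h1 : (n.factorial : ℝ) ≠ 0 := by positivity
  have h2 : (m.factorial : ℝ) ≠ 0 := by positivity
  have h3 : ((m : ℝ) + 2) ≠ 0 := by positivity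
  have h4 : ((m : ℝ) + 1) ≠ 0 := by positivity
  push_cast
  field_simp
  rw [← hmf]
  ring
  simp

/-- A particular polynomial solution of the inhomogeneous Tricomi equation
`y·u_xx + u_yy = xⁿ·yᵐ` (formula (6) of the paper), for `m ≥ 1`. -/
theorem tricomi_particular_solution (n m : ℕ) (hm : 1 ≤ m)
    (u : ℝ → ℝ → ℝ)
    (hu : ∀ x y : ℝ, u x y =
      ∑ j ∈ Finset.range (n / 2 + 1),
        (-1 : ℝ) ^ j *
          ((n.factorial : ℝ) * ((m - 1).factorial : ℝ) *
              (∏ k ∈ Finset.range (j + 1), ((m + 3 * k : ℕ) : ℝ)) /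
            (((m + 3 * j + 2).factorial : ℝ) * ((n - 2 * j).factorial : ℝ))) *
          y ^ (m + 3 * j + 2) * x ^ (n - 2 * j)) :
    ∀ x y : ℝ,
      y * deriv (deriv (fun x' => u x' y)) x + deriv (deriv (fun y' => u x y')) y
        = x ^ n * y ^ m := by
  intro x y
  set N := n / 2 with hN
  have hux : (fun x' => u x' y)
      = fun t => ∑ j ∈ Finset.range (N + 1), (tc n m j * y ^ (m + 3 * j + 2)) * t ^ (n - 2 * j) := by
    funext t; rw [hu]
    exact Finset.sum_congr rfl fun j _ => by unfold tc; ring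
  have huy : (fun y' => u x y')
      = fun t => ∑ j ∈ Finset.range (N + 1), (tc n m j * x ^ (n - 2 * j)) * t ^ (m + 3 * j + 2) := by
    funext t; rw [hu]
    exact Finset.sum_congr rfl fun j _ => by unfold tc; ring
  rw [hux, huy, deriv2_sum_pow, deriv2_sum_pow, Finset.mul_sum]
  -- simplify exponents in the y-sum
  have hyterm : ∀ j, (tc n m j * x ^ (n - 2 * j)) *
        (((m + 3 * j + 2 : ℕ) : ℝ) * (((m + 3 * j + 2 - 1 : ℕ) : ℝ) * y ^ (m + 3 * j + 2 - 2)))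
      = tc n m j * ((m + 3 * j + 2 : ℕ) : ℝ) * ((m + 3 * j + 1 : ℕ) : ℝ)
          * y ^ (m + 3 * j) * x ^ (n - 2 * j) := by
    intro j
    rw [show m + 3 * j + 2 - 1 = m + 3 * j + 1 from rfl,
        show m + 3 * j + 2 - 2 = m + 3 * j from rfl]
    ring
  have hxterm : ∀ j, y * ((tc n m j * y ^ (m + 3 * j + 2)) *
        (((n - 2 * j : ℕ) : ℝ) * (((n - 2 * j - 1 : ℕ) : ℝ) * x ^ (n - 2 * j - 2))))
      = tc n m j * ((n - 2 * j : ℕ) : ℝ) * ((n - 2 * j - 1 : ℕ) : ℝ)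
          * y ^ (m + 3 * j + 3) * x ^ (n - 2 * j - 2) := by
    intro j
    rw [show m + 3 * j + 3 = (m + 3 * j + 2) + 1 from rfl, pow_succ]
    ring
  rw [Finset.sum_congr rfl fun j _ => hxterm j, Finset.sum_congr rfl fun j _ => hyterm j]
  rw [Finset.sum_range_succ, Finset.sum_range_succ']
  -- last term of the x-sum vanishes
  have hlast : tc n m N * ((n - 2 * N : ℕ) : ℝ) * ((n - 2 * N - 1 : ℕ) : ℝ)
        * y ^ (m + 3 * N + 3) * x ^ (n - 2 * N - 2) = 0 := by
    have : n - 2 * N = 0 ∨ n - 2 * N - 1 = 0 := by omega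
    rcases this with h | h <;> rw [h] <;> simp
  rw [hlast, add_zero]
  -- first term of the y-sum is x^n y^m
  have hfirst : tc n m 0 * ((m + 3 * 0 + 2 : ℕ) : ℝ) * ((m + 3 * 0 + 1 : ℕ) : ℝ)
        * y ^ (m + 3 * 0) * x ^ (n - 2 * 0) = x ^ n * y ^ m := by
    have := tc_zero n m hm
    rw [show m + 3 * 0 + 2 = m + 2 from by ring, show m + 3 * 0 + 1 = m + 1 from by ring,
        show m + 3 * 0 = m from by ring, show n - 2 * 0 = n from by omega]
    calc tc n m 0 * ((m + 2 : ℕ) : ℝ) * ((m + 1 : ℕ) : ℝ) * y ^ m * x ^ n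
        = (tc n m 0 * (((m + 2 : ℕ) : ℝ) * ((m + 1 : ℕ) : ℝ))) * (x ^ n * y ^ m) := by ring
      _ = x ^ n * y ^ m := by rw [this]; ring
  rw [hfirst]
  -- the remaining sums cancel termwise
  have hcancel : ∀ j ∈ Finset.range N,
      tc n m j * ((n - 2 * j : ℕ) : ℝ) * ((n - 2 * j - 1 : ℕ) : ℝ)
          * y ^ (m + 3 * j + 3) * x ^ (n - 2 * j - 2)
        + tc n m (j + 1) * ((m + 3 * (j + 1) + 2 : ℕ) : ℝ) * ((m + 3 * (j + 1) + 1 : ℕ) : ℝ)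
          * y ^ (m + 3 * (j + 1)) * x ^ (n - 2 * (j + 1)) = 0 := by
    intro j hj
    have hjn : 2 * (j + 1) ≤ n := by
      have := Finset.mem_range.mp hj; omega
    have key := tc_key n m j hjn
    have he1 : m + 3 * (j + 1) + 2 = m + 3 * j + 5 := by ring
    have he2 : m + 3 * (j + 1) + 1 = m + 3 * j + 4 := by ring
    have he3 : m + 3 * (j + 1) = m + 3 * j + 3 := by ring
    have he4 : n - 2 * (j + 1) = n - 2 * j - 2 := by omega
    rw [he1, he2, he3, he4]
    have : (tc n m j * ((n - 2 * j : ℕ) : ℝ) * ((n - 2 * j - 1 : ℕ) : ℝ)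
        + tc n m (j + 1) * ((m + 3 * j + 5 : ℕ) : ℝ) * ((m + 3 * j + 4 : ℕ) : ℝ))
        * (y ^ (m + 3 * j + 3) * x ^ (n - 2 * j - 2)) = 0 := by rw [key]; ring
    linarith [this]
  have hsum : (∑ j ∈ Finset.range N,
        tc n m j * ((n - 2 * j : ℕ) : ℝ) * ((n - 2 * j - 1 : ℕ) : ℝ)
          * y ^ (m + 3 * j + 3) * x ^ (n - 2 * j - 2))
      + (∑ j ∈ Finset.range N,
        tc n m (j + 1) * ((m + 3 * (j + 1) + 2 : ℕ) : ℝ) * ((m + 3 * (j + 1) + 1 : ℕ) : ℝ)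
          * y ^ (m + 3 * (j + 1)) * x ^ (n - 2 * (j + 1))) = 0 := by
    rw [← Finset.sum_add_distrib]
    exact Finset.sum_eq_zero hcancel
  linarith [hsum]
end

section
/- For b > 0, the function u_4(x,y) = (1/(210b))·(−210x⁴y + 210x⁴b + 210x²y⁴ − 420x²y³b + 210x²yb³ − 10y⁷ + 28by⁶ − 35b³y⁴ + 17b⁶y) satisfies y·(u_4)_xx + (u_4)_yy = 0, u_4(x,0) = x⁴, and u_4(x,b) = 0 for all real x. -/
lemma deriv_poly7 (c0 c1 c2 c3 c4 c5 c6 c7 : ℝ) :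
    deriv (fun y : ℝ => c0 + c1*y + c2*y^2 + c3*y^3 + c4*y^4 + c5*y^5 + c6*y^6 + c7*y^7)
    = fun y => c1 + 2*c2*y + 3*c3*y^2 + 4*c4*y^3 + 5*c5*y^4 + 6*c6*y^5 + 7*c7*y^6 := by
  funext y
  have h : HasDerivAt (fun y : ℝ => c0 + c1*y + c2*y^2 + c3*y^3 + c4*y^4 + c5*y^5 + c6*y^6 + c7*y^7)
      (c1 + 2*c2*y + 3*c3*y^2 + 4*c4*y^3 + 5*c5*y^4 + 6*c6*y^5 + 7*c7*y^6) y := by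
    have h := ((((((((hasDerivAt_const y c0).add ((hasDerivAt_id y).const_mul c1)).add
      ((hasDerivAt_pow 2 y).const_mul c2)).add
      ((hasDerivAt_pow 3 y).const_mul c3)).add
      ((hasDerivAt_pow 4 y).const_mul c4)).add
      ((hasDerivAt_pow 5 y).const_mul c5)).add
      ((hasDerivAt_pow 6 y).const_mul c6)).add
      ((hasDerivAt_pow 7 y).const_mul c7))
    convert h using 1
    · rfl
    · rfl
    · funext y; simp only [Pi.add_apply, id]
    push_cast
    ring
  exact h.deriv

theorem tricomi_dirichlet_u4 (b : ℝ) (hb : 0 < b)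
    (u : ℝ → ℝ → ℝ)
    (hu : ∀ x y : ℝ, u x y =
      (1/(210*b)) * (-210*x^4*y + 210*x^4*b + 210*x^2*y^4 - 420*x^2*y^3*b
        + 210*x^2*y*b^3 - 10*y^7 + 28*b*y^6 - 35*b^3*y^4 + 17*b^6*y)) :
    (∀ x y : ℝ,
      y * deriv (deriv (fun x' => u x' y)) x + deriv (deriv (fun y' => u x y')) y = 0)
    ∧ (∀ x : ℝ, u x 0 = x^4) ∧ (∀ x : ℝ, u x b = 0) := by
  have hb' : b ≠ 0 := ne_of_gt hb
  refine ⟨?_, ?_, ?_⟩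
  · intro x y
    have hx : (fun x' => u x' y) = fun x' : ℝ =>
        (1/(210*b)) * (-10*y^7 + 28*b*y^6 - 35*b^3*y^4 + 17*b^6*y)
        + 0*x' + ((1/(210*b)) * (210*y^4 - 420*y^3*b + 210*y*b^3))*x'^2
        + 0*x'^3 + ((1/(210*b)) * (-210*y + 210*b))*x'^4 + 0*x'^5 + 0*x'^6 + 0*x'^7 := by
      funext x'; rw [hu]; ring
    have hy : (fun y' => u x y') = fun y' : ℝ =>
        (1/(210*b)) * (210*x^4*b)
        + ((1/(210*b)) * (-210*x^4 + 210*x^2*b^3 + 17*b^6))*y' + 0*y'^2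
        + ((1/(210*b)) * (-420*x^2*b))*y'^3 + ((1/(210*b)) * (210*x^2 - 35*b^3))*y'^4
        + 0*y'^5 + ((1/(210*b)) * (28*b))*y'^6 + ((1/(210*b)) * (-10))*y'^7 := by
      funext y'; rw [hu]; ring
    rw [hx, hy, deriv_poly7, deriv_poly7]
    have e1 : (fun x' : ℝ => 0 + 2*((1/(210*b)) * (210*y^4 - 420*y^3*b + 210*y*b^3))*x'
          + 3*0*x'^2 + 4*((1/(210*b)) * (-210*y + 210*b))*x'^3 + 5*0*x'^4 + 6*0*x'^5 + 7*0*x'^6)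
        = fun x' : ℝ => 0 + (2*((1/(210*b)) * (210*y^4 - 420*y^3*b + 210*y*b^3)))*x' + 0*x'^2
          + (4*((1/(210*b)) * (-210*y + 210*b)))*x'^3 + 0*x'^4 + 0*x'^5 + 0*x'^6 + 0*x'^7 := by
      funext x'; ring
    have e2 : (fun y' : ℝ => (1/(210*b)) * (-210*x^4 + 210*x^2*b^3 + 17*b^6) + 2*0*y'
          + 3*((1/(210*b)) * (-420*x^2*b))*y'^2 + 4*((1/(210*b)) * (210*x^2 - 35*b^3))*y'^3
          + 5*0*y'^4 + 6*((1/(210*b)) * (28*b))*y'^5 + 7*((1/(210*b)) * (-10))*y'^6)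
        = fun y' : ℝ => (1/(210*b)) * (-210*x^4 + 210*x^2*b^3 + 17*b^6) + 0*y'
          + (3*((1/(210*b)) * (-420*x^2*b)))*y'^2 + (4*((1/(210*b)) * (210*x^2 - 35*b^3)))*y'^3
          + 0*y'^4 + (6*((1/(210*b)) * (28*b)))*y'^5 + (7*((1/(210*b)) * (-10)))*y'^6 + 0*y'^7 := by
      funext y'; ring
    rw [e1, e2, deriv_poly7, deriv_poly7]
    field_simp
    ring
  · intro x; rw [hu]; field_simp; ring
  · intro x; rw [hu]; field_simp; ring
end

section
/- For b > 0, the function u_5(x,y) = (x/(42b))·(−42x⁴y + 42x⁴b + 70x²y⁴ − 140x²y³b + 70x²yb³ − 10y⁷ + 28by⁶ − 35b³y⁴ + 17b⁶y) satisfies y·(u_5)_xx + (u_5)_yy = 0, u_5(x,0) = x⁵, and u_5(x,b) = 0 for all real x. -/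
lemma hasDerivAt_poly7 (a7 a6 a5 a4 a3 a2 a1 a0 t : ℝ) :
    HasDerivAt (fun t : ℝ => a7*t^7 + a6*t^6 + a5*t^5 + a4*t^4 + a3*t^3 + a2*t^2 + a1*t + a0)
      (7*a7*t^6 + 6*a6*t^5 + 5*a5*t^4 + 4*a4*t^3 + 3*a3*t^2 + 2*a2*t + a1) t := by
  have h1 := (hasDerivAt_pow 7 t).const_mul a7
  have h2 := (hasDerivAt_pow 6 t).const_mul a6
  have h3 := (hasDerivAt_pow 5 t).const_mul a5
  have h4 := (hasDerivAt_pow 4 t).const_mul a4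
  have h5 := (hasDerivAt_pow 3 t).const_mul a3
  have h6 := (hasDerivAt_pow 2 t).const_mul a2
  have h7 := (hasDerivAt_id t).const_mul a1
  have h := ((((((h1.add h2).add h3).add h4).add h5).add h6).add h7).add_const a0
  refine h.congr_deriv ?_
  push_cast
  ring

lemma deriv_eq_poly (f : ℝ → ℝ) (a7 a6 a5 a4 a3 a2 a1 a0 : ℝ)
    (hf : f = fun t : ℝ => a7*t^7 + a6*t^6 + a5*t^5 + a4*t^4 + a3*t^3 + a2*t^2 + a1*t + a0) :
    deriv f = fun t : ℝ => 7*a7*t^6 + 6*a6*t^5 + 5*a5*t^4 + 4*a4*t^3 + 3*a3*t^2 + 2*a2*t + a1 := by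
  subst hf
  funext t
  exact (hasDerivAt_poly7 a7 a6 a5 a4 a3 a2 a1 a0 t).deriv

theorem tricomi_dirichlet_u5 (b : ℝ) (hb : 0 < b)
    (u : ℝ → ℝ → ℝ)
    (hu : ∀ x y : ℝ, u x y =
      (x/(42*b)) * (-42*x^4*y + 42*x^4*b + 70*x^2*y^4 - 140*x^2*y^3*b
        + 70*x^2*y*b^3 - 10*y^7 + 28*b*y^6 - 35*b^3*y^4 + 17*b^6*y)) :
    (∀ x y : ℝ,
      y * deriv (deriv (fun x' => u x' y)) x + deriv (deriv (fun y' => u x y')) y = 0)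
    ∧ (∀ x : ℝ, u x 0 = x^5) ∧ (∀ x : ℝ, u x b = 0) := by
  have hb' : (42:ℝ)*b ≠ 0 := by positivity
  refine ⟨fun x y => ?_, fun x => ?_, fun x => ?_⟩
  · set A5 := (-42*y + 42*b)/(42*b) with hA5
    set A3 := (70*y^4 - 140*y^3*b + 70*y*b^3)/(42*b) with hA3
    set A1 := (-10*y^7 + 28*b*y^6 - 35*b^3*y^4 + 17*b^6*y)/(42*b) with hA1
    have D1 := deriv_eq_poly (fun x' => u x' y) 0 0 A5 0 A3 0 A1 0
      (by funext t; rw [hu]; rw [hA5, hA3, hA1]; ring)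
    have D2 := deriv_eq_poly (deriv (fun x' => u x' y)) 0 0 0 (5*A5) 0 (3*A3) 0 A1
      (by rw [D1]; funext t; ring)
    set B7 := (-10*x)/(42*b) with hB7
    set B6 := (28*b*x)/(42*b) with hB6
    set B4 := (70*x^3 - 35*b^3*x)/(42*b) with hB4
    set B3 := (-140*x^3*b)/(42*b) with hB3
    set B1 := (-42*x^5 + 70*x^3*b^3 + 17*b^6*x)/(42*b) with hB1
    set B0 := (42*x^5*b)/(42*b) with hB0
    have E1 := deriv_eq_poly (fun y' => u x y') B7 B6 0 B4 B3 0 B1 B0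
      (by funext t; rw [hu]; rw [hB7, hB6, hB4, hB3, hB1, hB0]; ring)
    have E2 := deriv_eq_poly (deriv (fun y' => u x y')) 0 (7*B7) (6*B6) 0 (4*B4) (3*B3) 0 B1
      (by rw [E1]; funext t; ring)
    rw [D2, E2]
    simp only [hA5, hA3, hA1, hB7, hB6, hB4, hB3, hB1]
    field_simp
    ring
  · rw [hu]; field_simp; ring
  · rw [hu]; field_simp; ring
end

section
/- For b > 0, the function v_3(x,y) = (xy/(2b))·(2x² − y³ + b³) satisfies y·(v_3)_xx + (v_3)_yy = 0, v_3(x,0) = 0, and v_3(x,b) = x³ for all real x. -/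
lemma deriv_cubic (a c : ℝ) :
    deriv (fun t : ℝ => a * t ^ 3 + c * t) = fun t => 3 * a * t ^ 2 + c := by
  funext t
  have h : HasDerivAt (fun t : ℝ => a * t ^ 3 + c * t) (a * (3 * t ^ 2) + c * 1) t :=
    ((hasDerivAt_pow 3 t).const_mul a).add ((hasDerivAt_id t).const_mul c)
  simpa using h.deriv.trans (by ring)

lemma deriv_quad (a c : ℝ) :
    deriv (fun t : ℝ => 3 * a * t ^ 2 + c) = fun t => 6 * a * t := by
  funext t
  have h : HasDerivAt (fun t : ℝ => 3 * a * t ^ 2 + c) (3 * a * (2 * t ^ 1) + 0) t :=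
    ((hasDerivAt_pow 2 t).const_mul (3 * a)).add (hasDerivAt_const t c)
  simpa using h.deriv.trans (by ring)

lemma deriv_quartic (a c : ℝ) :
    deriv (fun t : ℝ => a * t ^ 4 + c * t) = fun t => 4 * a * t ^ 3 + c := by
  funext t
  have h : HasDerivAt (fun t : ℝ => a * t ^ 4 + c * t) (a * (4 * t ^ 3) + c * 1) t :=
    ((hasDerivAt_pow 4 t).const_mul a).add ((hasDerivAt_id t).const_mul c)
  simpa using h.deriv.trans (by ring)

lemma deriv_cubic' (a c : ℝ) :
    deriv (fun t : ℝ => 4 * a * t ^ 3 + c) = fun t => 12 * a * t ^ 2 := by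
  funext t
  have h : HasDerivAt (fun t : ℝ => 4 * a * t ^ 3 + c) (4 * a * (3 * t ^ 2) + 0) t :=
    ((hasDerivAt_pow 3 t).const_mul (4 * a)).add (hasDerivAt_const t c)
  simpa using h.deriv.trans (by ring)

theorem tricomi_dirichlet_v3 (b : ℝ) (hb : 0 < b)
    (v : ℝ → ℝ → ℝ)
    (hv : ∀ x y : ℝ, v x y = (x*y/(2*b)) * (2*x^2 - y^3 + b^3)) :
    (∀ x y : ℝ,
      y * deriv (deriv (fun x' => v x' y)) x + deriv (deriv (fun y' => v x y')) y = 0)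
    ∧ (∀ x : ℝ, v x 0 = 0) ∧ (∀ x : ℝ, v x b = x^3) := by
  have hb' : b ≠ 0 := hb.ne'
  refine ⟨fun x y => ?_, fun x => ?_, fun x => ?_⟩
  · have hx : (fun x' => v x' y)
        = fun x' => (y / b) * x' ^ 3 + (y * (b ^ 3 - y ^ 3) / (2 * b)) * x' := by
      funext t; rw [hv]; field_simp; ring
    have hy : (fun y' => v x y')
        = fun y' => (-(x / (2 * b))) * y' ^ 4 + (x * (2 * x ^ 2 + b ^ 3) / (2 * b)) * y' := by
      funext t; rw [hv]; field_simp; ring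
    rw [hx, hy, deriv_cubic, deriv_quartic, deriv_quad, deriv_cubic']
    field_simp
    ring
  · rw [hv]; ring
  · rw [hv]; field_simp; ring
end

section
/- For b > 0, the function v_4(x,y) = (y/(42b))·(42x⁴ − 42x²y³ + 42x²b³ + 2y⁶ − 7b³y³ + 5b⁶) satisfies y·(v_4)_xx + (v_4)_yy = 0, v_4(x,0) = 0, and v_4(x,b) = x⁴ for all real x. -/
private lemma deriv1x (a c e x : ℝ) :
    deriv (fun x : ℝ => a*x^4 + c*x^2 + e) x = 4*a*x^3 + 2*c*x := by
  have h : HasDerivAt (fun x : ℝ => a*x^4 + c*x^2 + e)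
      (a*(4*x^3) + c*(2*x^1)) x := by
    simpa using (((hasDerivAt_pow 4 x).const_mul a).add
      ((hasDerivAt_pow 2 x).const_mul c)).add_const e
  rw [h.deriv]; ring

private lemma deriv2x (a c e x : ℝ) :
    deriv (deriv (fun x : ℝ => a*x^4 + c*x^2 + e)) x = 12*a*x^2 + 2*c := by
  have h : deriv (fun x : ℝ => a*x^4 + c*x^2 + e) = fun x => 4*a*x^3 + 2*c*x := by
    funext t; exact deriv1x a c e t
  rw [h]
  have h2 : HasDerivAt (fun x : ℝ => 4*a*x^3 + 2*c*x)
      (4*a*(3*x^2) + 2*c*(1*x^0)) x := by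
    simpa [Pi.add_def] using (((hasDerivAt_pow 3 x).const_mul (4*a)).add
      ((hasDerivAt_pow 1 x).const_mul (2*c)))
  rw [h2.deriv]; ring

private lemma deriv2y (A B C y : ℝ) :
    deriv (deriv (fun y : ℝ => A*y + B*y^4 + C*y^7)) y = 12*B*y^2 + 42*C*y^5 := by
  have h : deriv (fun y : ℝ => A*y + B*y^4 + C*y^7)
      = fun y => A + 4*B*y^3 + 7*C*y^6 := by
    funext t
    have h1 : HasDerivAt (fun y : ℝ => A*y + B*y^4 + C*y^7)
        (A*(1*t^0) + B*(4*t^3) + C*(7*t^6)) t := by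
      simpa [Pi.add_def] using ((((hasDerivAt_pow 1 t).const_mul A).add
        ((hasDerivAt_pow 4 t).const_mul B)).add ((hasDerivAt_pow 7 t).const_mul C))
    rw [h1.deriv]; ring
  rw [h]
  have h2 : HasDerivAt (fun y : ℝ => A + 4*B*y^3 + 7*C*y^6)
      (4*B*(3*y^2) + 7*C*(6*y^5)) y := by
    have := (((hasDerivAt_pow 3 y).const_mul (4*B)).add
      ((hasDerivAt_pow 6 y).const_mul (7*C))).const_add A
    simpa [add_assoc] using this
  rw [h2.deriv]; ring

theorem tricomi_dirichlet_v4 (b : ℝ) (hb : 0 < b)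
    (v : ℝ → ℝ → ℝ)
    (hv : ∀ x y : ℝ, v x y =
      (y/(42*b)) * (42*x^4 - 42*x^2*y^3 + 42*x^2*b^3 + 2*y^6 - 7*b^3*y^3 + 5*b^6)) :
    (∀ x y : ℝ,
      y * deriv (deriv (fun x' => v x' y)) x + deriv (deriv (fun y' => v x y')) y = 0)
    ∧ (∀ x : ℝ, v x 0 = 0) ∧ (∀ x : ℝ, v x b = x^4) := by
  have hb' : b ≠ 0 := ne_of_gt hb
  refine ⟨fun x y => ?_, fun x => by rw [hv]; ring, fun x => by rw [hv]; field_simp; ring⟩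
  have hx : (fun x' => v x' y) = fun x' =>
      (y/(42*b)*42)*x'^4 + (y/(42*b)*(-42*y^3 + 42*b^3))*x'^2
        + (y/(42*b)*(2*y^6 - 7*b^3*y^3 + 5*b^6)) := by
    funext t; rw [hv]; ring
  have hy : (fun y' => v x y') = fun y' =>
      ((42*x^4 + 42*x^2*b^3 + 5*b^6)/(42*b))*y' + ((-42*x^2 - 7*b^3)/(42*b))*y'^4
        + (2/(42*b))*y'^7 := by
    funext t; rw [hv]; ring
  rw [hx, hy, deriv2x, deriv2y]
  field_simp
  ring
end

section
/- For b > 0, the function v_5(x,y) = (xy/(42b))·(42x⁴ − 70x²y³ + 70x²b³ + 10y⁶ − 35b³y³ + 25b⁶) satisfies y·(v_5)_xx + (v_5)_yy = 0, v_5(x,0) = 0, and v_5(x,b) = x⁵ for all real x. -/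
private lemma septic_hasDerivAt (a b c d e f g h t : ℝ) :
    HasDerivAt (fun t : ℝ => a*t^7 + b*t^6 + c*t^5 + d*t^4 + e*t^3 + f*t^2 + g*t + h)
      (7*a*t^6 + 6*b*t^5 + 5*c*t^4 + 4*d*t^3 + 3*e*t^2 + 2*f*t + g) t := by
  have hh := (((((((((hasDerivAt_pow 7 t).const_mul a).add
    ((hasDerivAt_pow 6 t).const_mul b)).add
    ((hasDerivAt_pow 5 t).const_mul c)).add
    ((hasDerivAt_pow 4 t).const_mul d)).add
    ((hasDerivAt_pow 3 t).const_mul e)).add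
    ((hasDerivAt_pow 2 t).const_mul f)).add
    ((hasDerivAt_id t).const_mul g)).add_const h)
  refine hh.congr_deriv ?_
  push_cast
  ring

theorem tricomi_dirichlet_v5 (b : ℝ) (hb : 0 < b)
    (v : ℝ → ℝ → ℝ)
    (hv : ∀ x y : ℝ, v x y =
      (x*y/(42*b)) * (42*x^4 - 70*x^2*y^3 + 70*x^2*b^3 + 10*y^6 - 35*b^3*y^3 + 25*b^6)) :
    (∀ x y : ℝ,
      y * deriv (deriv (fun x' => v x' y)) x + deriv (deriv (fun y' => v x y')) y = 0)
    ∧ (∀ x : ℝ, v x 0 = 0) ∧ (∀ x : ℝ, v x b = x^5) := by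
  have hb' : (42:ℝ)*b ≠ 0 := by positivity
  refine ⟨?_, ?_, ?_⟩
  · intro x y
    have hx1 : ∀ x : ℝ, deriv (fun x' => v x' y) x
        = (5*(42*y)/(42*b))*x^4 + (3*(y*(-70*y^3+70*b^3))/(42*b))*x^2
          + (y*(10*y^6-35*b^3*y^3+25*b^6))/(42*b) := by
      intro x
      have heq : (fun x' => v x' y) =
          (fun t : ℝ => 0*t^7 + 0*t^6 + (42*y/(42*b))*t^5 + 0*t^4
            + ((y*(-70*y^3+70*b^3))/(42*b))*t^3
            + 0*t^2 + ((y*(10*y^6-35*b^3*y^3+25*b^6))/(42*b))*t + 0) := by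
        funext t
        rw [hv]
        field_simp
        ring
      rw [heq, (septic_hasDerivAt _ _ _ _ _ _ _ _ _).deriv]
      ring
    have hx2 : deriv (deriv (fun x' => v x' y)) x
        = 4*(5*(42*y)/(42*b))*x^3 + 2*(3*(y*(-70*y^3+70*b^3))/(42*b))*x := by
      have heq : deriv (fun x' => v x' y) =
          (fun t : ℝ => 0*t^7 + 0*t^6 + 0*t^5 + (5*(42*y)/(42*b))*t^4 + 0*t^3
            + (3*(y*(-70*y^3+70*b^3))/(42*b))*t^2
            + 0*t + (y*(10*y^6-35*b^3*y^3+25*b^6))/(42*b)) := by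
        funext t; rw [hx1]; ring
      rw [heq, (septic_hasDerivAt _ _ _ _ _ _ _ _ _).deriv]
      ring
    have hy1 : ∀ y : ℝ, deriv (fun y' => v x y') y
        = 7*(10*x/(42*b))*y^6 + 4*((x*(-70*x^2-35*b^3))/(42*b))*y^3
          + (x*(42*x^4+70*x^2*b^3+25*b^6))/(42*b) := by
      intro y
      have heq : (fun y' => v x y') =
          (fun t : ℝ => (10*x/(42*b))*t^7 + 0*t^6 + 0*t^5
            + ((x*(-70*x^2-35*b^3))/(42*b))*t^4 + 0*t^3
            + 0*t^2 + ((x*(42*x^4+70*x^2*b^3+25*b^6))/(42*b))*t + 0) := by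
        funext t
        rw [hv]
        field_simp
        ring
      rw [heq, (septic_hasDerivAt _ _ _ _ _ _ _ _ _).deriv]
      ring
    have hy2 : deriv (deriv (fun y' => v x y')) y
        = 6*(7*(10*x/(42*b)))*y^5 + 3*(4*((x*(-70*x^2-35*b^3))/(42*b)))*y^2 := by
      have heq : deriv (fun y' => v x y') =
          (fun t : ℝ => 0*t^7 + (7*(10*x/(42*b)))*t^6 + 0*t^5 + 0*t^4
            + (4*((x*(-70*x^2-35*b^3))/(42*b)))*t^3 + 0*t^2
            + 0*t + (x*(42*x^4+70*x^2*b^3+25*b^6))/(42*b)) := by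
        funext t; rw [hy1]; ring
      rw [heq, (septic_hasDerivAt _ _ _ _ _ _ _ _ _).deriv]
      ring
    rw [hx2, hy2]
    field_simp
    ring
  · intro x; rw [hv]; ring
  · intro x; rw [hv]; field_simp; ring
end

section
/- For a > 0, the function u_3(x,y) = (x/(4a))·(−2x²y + 2ax² + y⁴ − 2ay³ + 2a³y − a⁴) satisfies y·(u_3)_xx + (u_3)_yy = 0, u_3(x,−a) = x³, and u_3(x,a) = 0 for all real x. -/
private lemma quartic_hasDerivAt (p q r s t x : ℝ) :
    HasDerivAt (fun w : ℝ => p*w^4 + q*w^3 + r*w^2 + s*w + t)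
      (4*p*x^3 + 3*q*x^2 + 2*r*x + s) x := by
  have hf : (fun w : ℝ => p*w^4 + q*w^3 + r*w^2 + s*w + t)
      = fun w : ℝ => ((p*w^4 + q*w^3) + r*w^2) + (s*w + t) := by
    funext w; ring
  rw [hf]
  have h := ((((hasDerivAt_pow 4 x).const_mul p).add
      ((hasDerivAt_pow 3 x).const_mul q)).add
      ((hasDerivAt_pow 2 x).const_mul r)).add
      (((hasDerivAt_id x).const_mul s).add_const t)
  refine h.congr_deriv ?_
  norm_num
  ring

private lemma quartic_deriv (p q r s t : ℝ) :
    deriv (fun w : ℝ => p*w^4 + q*w^3 + r*w^2 + s*w + t)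
      = fun x => 4*p*x^3 + 3*q*x^2 + 2*r*x + s := by
  funext x
  exact (quartic_hasDerivAt p q r s t x).deriv

theorem tricomi_mixed_dirichlet_u3 (a : ℝ) (ha : 0 < a)
    (u : ℝ → ℝ → ℝ)
    (hu : ∀ x y : ℝ, u x y =
      (x/(4*a)) * (-2*x^2*y + 2*a*x^2 + y^4 - 2*a*y^3 + 2*a^3*y - a^4)) :
    (∀ x y : ℝ,
      y * deriv (deriv (fun x' => u x' y)) x + deriv (deriv (fun y' => u x y')) y = 0)
    ∧ (∀ x : ℝ, u x (-a) = x^3) ∧ (∀ x : ℝ, u x a = 0) := by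
  have ha' : (4 : ℝ) * a ≠ 0 := by positivity
  refine ⟨?_, ?_, ?_⟩
  · intro x y
    have hx : (fun x' => u x' y)
        = fun x' => 0*x'^4 + ((-2*y + 2*a)/(4*a))*x'^3 + 0*x'^2
          + ((y^4 - 2*a*y^3 + 2*a^3*y - a^4)/(4*a))*x' + 0 := by
      funext x'; rw [hu]; field_simp; ring
    have hy : (fun y' => u x y')
        = fun y' => (x/(4*a))*y'^4 + (x*(-2*a)/(4*a))*y'^3 + 0*y'^2
          + (x*(-2*x^2 + 2*a^3)/(4*a))*y' + (x*(2*a*x^2 - a^4)/(4*a)) := by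
      funext y'; rw [hu]; field_simp; ring
    rw [hx, hy, quartic_deriv, quartic_deriv]
    have e1 : (fun x => 4*0*x^3 + 3*((-2*y + 2*a)/(4*a))*x^2 + 2*0*x
        + (y^4 - 2*a*y^3 + 2*a^3*y - a^4)/(4*a))
        = fun x : ℝ => 0*x^4 + 0*x^3 + (3*((-2*y + 2*a)/(4*a)))*x^2 + 0*x
          + (y^4 - 2*a*y^3 + 2*a^3*y - a^4)/(4*a) := by
      funext z; ring
    have e2 : (fun y' => 4*(x/(4*a))*y'^3 + 3*(x*(-2*a)/(4*a))*y'^2 + 2*0*y'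
        + x*(-2*x^2 + 2*a^3)/(4*a))
        = fun y' : ℝ => 0*y'^4 + (4*(x/(4*a)))*y'^3 + (3*(x*(-2*a)/(4*a)))*y'^2
          + 0*y' + x*(-2*x^2 + 2*a^3)/(4*a) := by
      funext z; ring
    rw [e1, e2, quartic_deriv, quartic_deriv]
    field_simp
    ring
  · intro x; rw [hu]; field_simp; ring
  · intro x; rw [hu]; field_simp; ring
end

section
/- Let a > 0 and let P(x,y) be a polynomial in two real variables such that y·P_xx(x,y) + P_yy(x,y) = 0 for all (x,y) ∈ ℝ², and P(x,−a) = 0 and P(x,a) = 0 for all x ∈ ℝ. Then P is identically zero. -/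
open MvPolynomial Finset

namespace TricomiAux

/-- The exponent finsupp of the monomial `x^i y^j`. -/
noncomputable def mon (i j : ℕ) : Fin 2 →₀ ℕ := Finsupp.single 0 i + Finsupp.single 1 j

lemma mon_apply0 (i j : ℕ) : mon i j 0 = i := by
  simp [mon, Finsupp.single_apply]

lemma mon_apply1 (i j : ℕ) : mon i j 1 = j := by
  simp [mon, Finsupp.single_apply]

lemma mon_add_x (i j : ℕ) : mon i j + Finsupp.single 0 1 = mon (i + 1) j := by
  simp [mon, Finsupp.single_add]
  abel

lemma mon_add_y (i j : ℕ) : mon i j + Finsupp.single 1 1 = mon i (j + 1) := by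
  simp [mon, Finsupp.single_add]
  abel

lemma single_add_mon (i j : ℕ) : Finsupp.single 1 1 + mon i j = mon i (j + 1) := by
  rw [add_comm]; exact mon_add_y i j

lemma eq_mon (m : Fin 2 →₀ ℕ) : m = mon (m 0) (m 1) := by
  ext k
  fin_cases k <;> simp [mon, Finsupp.single_apply]

lemma mon_injective : Function.Injective (fun p : ℕ × ℕ => mon p.1 p.2) := by
  intro p q h
  have h0 := congrArg (fun m : Fin 2 →₀ ℕ => m 0) h
  have h1 := congrArg (fun m : Fin 2 →₀ ℕ => m 1) h
  simp only [mon_apply0, mon_apply1] at h0 h1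
  exact Prod.ext h0 h1

lemma mon_sum (i j : ℕ) : (mon i j).sum (fun _ e => e) = i + j := by
  rw [mon, Finsupp.sum_add_index (by simp) (by simp)]
  simp

lemma coeff_pderiv (i : Fin 2) (P : MvPolynomial (Fin 2) ℝ) (m : Fin 2 →₀ ℕ) :
    coeff m (pderiv i P) = ((m i : ℝ) + 1) * coeff (m + Finsupp.single i 1) P := by
  induction P using MvPolynomial.induction_on' with
  | add p q hp hq => simp [hp, hq, mul_add]
  | monomial s a =>
    rw [pderiv_monomial, coeff_monomial, coeff_monomial]
    by_cases h2 : s = m + Finsupp.single i 1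
    · have hs : s - Finsupp.single i 1 = m := by
        rw [h2, add_tsub_cancel_right]
      have hsi : s i = m i + 1 := by rw [h2]; simp
      rw [if_pos hs, if_pos h2, hsi]
      push_cast
      ring
    · rw [if_neg h2, mul_zero]
      by_cases h1 : s - Finsupp.single i 1 = m
      · rw [if_pos h1]
        have hsi : s i = 0 := by
          by_contra hne
          have hle : Finsupp.single i 1 ≤ s := by
            rw [Finsupp.single_le_iff]
            omega
          apply h2
          rw [← h1, tsub_add_cancel_of_le hle]
        rw [hsi]
        simp
      · rw [if_neg h1]

lemma eval_expand (P : MvPolynomial (Fin 2) ℝ) (N : ℕ)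
    (hN : ∀ m ∈ P.support, m 0 < N ∧ m 1 < N) (x t : ℝ) :
    eval ![x, t] P =
      ∑ i ∈ range N, (∑ j ∈ range N, coeff (mon i j) P * t ^ j) * x ^ i := by
  have h1 : eval ![x, t] P = ∑ d ∈ P.support, coeff d P * (x ^ d 0 * t ^ d 1) := by
    rw [eval_eq']
    refine sum_congr rfl fun d _ => ?_
    congr 1
    rw [Fin.prod_univ_two]
    simp
  have h2 : ∑ d ∈ P.support, coeff d P * (x ^ d 0 * t ^ d 1)
      = ∑ d ∈ (range N ×ˢ range N).image (fun p => mon p.1 p.2),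
          coeff d P * (x ^ d 0 * t ^ d 1) := by
    refine Finset.sum_subset ?_ ?_
    · intro d hd
      rw [mem_image]
      exact ⟨(d 0, d 1), by
        rw [mem_product]
        exact ⟨mem_range.2 (hN d hd).1, mem_range.2 (hN d hd).2⟩, (eq_mon d).symm⟩
    · intro d _ hd
      rw [notMem_support_iff.mp hd, zero_mul]
  have h3 : ∑ d ∈ (range N ×ˢ range N).image (fun p => mon p.1 p.2),
          coeff d P * (x ^ d 0 * t ^ d 1)
      = ∑ p ∈ range N ×ˢ range N,
          coeff (mon p.1 p.2) P * (x ^ mon p.1 p.2 0 * t ^ mon p.1 p.2 1) :=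
    Finset.sum_image (fun p _ q _ h => mon_injective h)
  rw [h1, h2, h3, Finset.sum_product]
  refine sum_congr rfl fun i _ => ?_
  rw [sum_mul]
  refine sum_congr rfl fun j _ => ?_
  rw [mon_apply0, mon_apply1]
  ring

lemma boundary (P : MvPolynomial (Fin 2) ℝ) (N : ℕ)
    (hN : ∀ m ∈ P.support, m 0 < N ∧ m 1 < N) (t : ℝ)
    (h : ∀ x : ℝ, eval ![x, t] P = 0) (i : ℕ) :
    ∑ j ∈ range N, coeff (mon i j) P * t ^ j = 0 := by
  by_cases hi : i < N
  · set q : Polynomial ℝ :=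
      ∑ k ∈ range N, Polynomial.C (∑ j ∈ range N, coeff (mon k j) P * t ^ j)
        * Polynomial.X ^ k with hqdef
    have hq0 : q = 0 := by
      apply Polynomial.funext
      intro x
      rw [hqdef, Polynomial.eval_finset_sum]
      simp only [Polynomial.eval_mul, Polynomial.eval_C, Polynomial.eval_pow,
        Polynomial.eval_X, Polynomial.eval_zero]
      rw [← eval_expand P N hN x t]
      exact h x
    have hc := congrArg (fun r : Polynomial ℝ => r.coeff i) hq0
    simp only [hqdef, Polynomial.finset_sum_coeff, Polynomial.coeff_C_mul,
      Polynomial.coeff_X_pow, Polynomial.coeff_zero, mul_ite, mul_one, mul_zero] at hc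
    rwa [Finset.sum_ite_eq (range N) i
      (fun k => ∑ j ∈ range N, coeff (mon k j) P * t ^ j), if_pos (mem_range.2 hi)] at hc
  · refine Finset.sum_eq_zero fun j _ => ?_
    have hns : mon i j ∉ P.support := by
      intro hmem
      have := (hN _ hmem).1
      rw [mon_apply0] at this
      omega
    rw [notMem_support_iff.mp hns, zero_mul]


end TricomiAux


section Main

open MvPolynomial Finset TricomiAux

/-- Uniqueness of polynomial solutions of the Dirichlet problem for the homogeneous
Tricomi equation in the mixed strip `-a < y < a`. Here variable `0` is `x` and
variable `1` is `y`; `pderiv` is the formal partial derivative. -/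
theorem tricomi_polynomial_uniqueness_mixed (a : ℝ) (ha : 0 < a)
    (P : MvPolynomial (Fin 2) ℝ)
    (hT : ∀ x y : ℝ,
      y * eval ![x, y] (pderiv 0 (pderiv 0 P)) + eval ![x, y] (pderiv 1 (pderiv 1 P)) = 0)
    (hbot : ∀ x : ℝ, eval ![x, -a] P = 0)
    (htop : ∀ x : ℝ, eval ![x, a] P = 0) :
    P = 0 := by
  set N : ℕ := P.totalDegree + 3 with hNdef
  have hsupp : ∀ m ∈ P.support, m 0 < N ∧ m 1 < N := by
    intro m hm
    have h1 := MvPolynomial.le_totalDegree hm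
    have h2 : m.sum (fun _ e => e) = m 0 + m 1 := by
      conv_lhs => rw [eq_mon m]
      rw [mon_sum]
    rw [h2] at h1
    omega
  have hd0 : ∀ i j : ℕ, P.totalDegree < i + j → coeff (mon i j) P = 0 := by
    intro i j h
    apply coeff_eq_zero_of_totalDegree_lt
    show P.totalDegree < (mon i j).sum fun _ e => e
    rwa [mon_sum]
  -- the Tricomi equation as a polynomial identity
  have hE : (X 1 : MvPolynomial (Fin 2) ℝ) * pderiv 0 (pderiv 0 P)
      + pderiv 1 (pderiv 1 P) = 0 := by
    apply MvPolynomial.funext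
    intro v
    have hv : ![v 0, v 1] = v := by
      funext k
      fin_cases k <;> rfl
    have h := hT (v 0) (v 1)
    rw [hv] at h
    simpa using h
  have rel1 : ∀ i j : ℕ, ((i : ℝ) + 1) * ((i : ℝ) + 2) * coeff (mon (i + 2) j) P
      + ((j : ℝ) + 2) * ((j : ℝ) + 3) * coeff (mon i (j + 3)) P = 0 := by
    intro i j
    have hA : coeff (mon i (j + 1)) ((X 1 : MvPolynomial (Fin 2) ℝ)
        * pderiv 0 (pderiv 0 P))
        = ((i : ℝ) + 1) * ((i : ℝ) + 2) * coeff (mon (i + 2) j) P := by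
      rw [← single_add_mon i j, coeff_X_mul, coeff_pderiv, mon_add_x, coeff_pderiv,
        mon_add_x, mon_apply0, mon_apply0]
      have e : i + 1 + 1 = i + 2 := by omega
      rw [e]
      push_cast
      ring
    have hB : coeff (mon i (j + 1)) (pderiv 1 (pderiv 1 P))
        = ((j : ℝ) + 2) * ((j : ℝ) + 3) * coeff (mon i (j + 3)) P := by
      rw [coeff_pderiv, mon_add_y, coeff_pderiv, mon_add_y, mon_apply1, mon_apply1]
      have e : j + 1 + 1 + 1 = j + 3 := by omega
      rw [e]
      push_cast
      ring
    have h := congrArg (coeff (mon i (j + 1))) hE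
    rwa [coeff_add, coeff_zero, hA, hB] at h
  have rel2 : ∀ i : ℕ, coeff (mon i 2) P = 0 := by
    intro i
    have hA : coeff (mon i 0) ((X 1 : MvPolynomial (Fin 2) ℝ)
        * pderiv 0 (pderiv 0 P)) = 0 := by
      rw [coeff_X_mul', if_neg]
      simp [Finsupp.mem_support_iff, mon_apply1]
    have hB : coeff (mon i 0) (pderiv 1 (pderiv 1 P)) = 2 * coeff (mon i 2) P := by
      rw [coeff_pderiv, mon_add_y, coeff_pderiv, mon_add_y, mon_apply1, mon_apply1]
      have e : 0 + 1 + 1 = 2 := by omega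
      rw [e]
      norm_num
    have h := congrArg (coeff (mon i 0)) hE
    rw [coeff_add, coeff_zero, hA, hB, zero_add] at h
    linarith
  have key : ∀ n i j : ℕ, P.totalDegree < i + n → coeff (mon i j) P = 0 := by
    intro n
    induction n with
    | zero =>
      intro i j h
      exact hd0 i j (by omega)
    | succ n ih =>
      intro i j hi
      have h2 : ∀ j' : ℕ, coeff (mon (i + 2) j') P = 0 := fun j' => ih (i + 2) j' (by omega)
      have h3 : ∀ j' : ℕ, coeff (mon i (j' + 3)) P = 0 := by
        intro j'
        have h := rel1 i j'
        rw [h2 j'] at h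
        have hpos : ((j' : ℝ) + 2) * ((j' : ℝ) + 3) > 0 := by positivity
        have : ((j' : ℝ) + 2) * ((j' : ℝ) + 3) * coeff (mon i (j' + 3)) P = 0 := by
          linarith
        exact (mul_eq_zero.mp this).resolve_left (ne_of_gt hpos)
      have hge2 : ∀ j' : ℕ, 2 ≤ j' → coeff (mon i j') P = 0 := by
        intro j' hj'
        match j', hj' with
        | 2, _ => exact rel2 i
        | (k + 3), _ => exact h3 k
      have hbtop : coeff (mon i 0) P + coeff (mon i 1) P * a = 0 := by
        have hb := boundary P N hsupp a htop i
        rw [← Finset.sum_subset (Finset.range_subset_range.mpr (by omega : 2 ≤ N))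
          (fun x _ hx => by
            rw [hge2 x (by simp at hx; omega), zero_mul])] at hb
        rw [Finset.sum_range_succ, Finset.sum_range_one] at hb
        rw [← hb]
        ring
      have hbbot : coeff (mon i 0) P + coeff (mon i 1) P * (-a) = 0 := by
        have hb := boundary P N hsupp (-a) hbot i
        rw [← Finset.sum_subset (Finset.range_subset_range.mpr (by omega : 2 ≤ N))
          (fun x _ hx => by
            rw [hge2 x (by simp at hx; omega), zero_mul])] at hb
        rw [Finset.sum_range_succ, Finset.sum_range_one] at hb
        rw [← hb]
        ring
      have h1 : coeff (mon i 1) P = 0 := by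
        have : coeff (mon i 1) P * a = 0 := by linarith
        exact (mul_eq_zero.mp this).resolve_right (ne_of_gt ha)
      have h0 : coeff (mon i 0) P = 0 := by
        rw [h1, zero_mul, add_zero] at hbtop
        exact hbtop
      match j with
      | 0 => exact h0
      | 1 => exact h1
      | (k + 2) => exact hge2 (k + 2) (by omega)
  apply MvPolynomial.ext
  intro m
  rw [coeff_zero, eq_mon m]
  exact key (P.totalDegree + 1) (m 0) (m 1) (by omega)

end Main
end

section
/- Let b > 0 and let P(x,y) be a polynomial in two real variables such that y·P_xx + P_yy = 0 for all (x,y), and P(x,0) = 0 and P(x,b) = 0 for all x ∈ ℝ. Then P is identically zero. -/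
open MvPolynomial

noncomputable def tricomiPhi : MvPolynomial (Fin 2) ℝ →ₐ[ℝ] Polynomial (Polynomial ℝ) :=
  MvPolynomial.aeval ![Polynomial.X, Polynomial.C Polynomial.X]

lemma tricomiPhi_eval (x y : ℝ) (p : MvPolynomial (Fin 2) ℝ) :
    Polynomial.eval x (Polynomial.map (Polynomial.evalRingHom y) (tricomiPhi p)) =
      MvPolynomial.eval ![x, y] p := by
  induction p using MvPolynomial.induction_on with
  | C a => simp [tricomiPhi, algebraMap_eq]
  | add p q hp hq => simp [map_add, hp, hq]
  | mul_X p i hp =>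
    simp only [tricomiPhi] at hp ⊢
    fin_cases i <;> simp [map_mul, hp]

lemma tricomiPhi_pderiv0 (p : MvPolynomial (Fin 2) ℝ) :
    tricomiPhi (pderiv 0 p) = Polynomial.derivative (tricomiPhi p) := by
  induction p using MvPolynomial.induction_on with
  | C a => simp [tricomiPhi, algebraMap_eq]
  | add p q hp hq => simp [map_add, hp, hq]
  | mul_X p i hp =>
    rw [pderiv_mul]
    simp only [tricomiPhi] at hp ⊢
    fin_cases i <;>
      simp [pderiv_X, map_mul, map_add, hp, Polynomial.derivative_mul]

lemma tricomiPhi_pderiv1_coeff (p : MvPolynomial (Fin 2) ℝ) (k : ℕ) :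
    (tricomiPhi (pderiv 1 p)).coeff k =
      Polynomial.derivative ((tricomiPhi p).coeff k) := by
  induction p using MvPolynomial.induction_on generalizing k with
  | C a => simp [tricomiPhi, algebraMap_eq, Polynomial.coeff_C]; split <;> simp
  | add p q hp hq => simp [map_add, hp, hq]
  | mul_X p i hp =>
    rw [pderiv_mul]
    simp only [tricomiPhi] at hp ⊢
    fin_cases i
    · simp only [pderiv_X, if_neg, Pi.single_eq_of_ne]
      cases k with
      | zero =>
        simp [map_mul, map_add]
      | succ n =>
        simp [map_mul, map_add, Polynomial.coeff_mul_X, hp]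
    · simp only [pderiv_X]
      simp [map_mul, map_add, Polynomial.coeff_mul_C, hp,
        Polynomial.derivative_mul]

lemma tricomi_line_zero (b : ℝ) (hb : 0 < b) (c : Polynomial ℝ)
    (hdd : Polynomial.derivative (Polynomial.derivative c) = 0)
    (h0 : c.eval 0 = 0) (hbv : c.eval b = 0) : c = 0 := by
  have hdeg : c.natDegree ≤ 1 := by
    rw [Polynomial.natDegree_le_iff_coeff_eq_zero]
    intro N hN
    obtain ⟨n, rfl⟩ : ∃ n, N = n + 2 := ⟨N - 2, by omega⟩
    have := congrArg (fun q => Polynomial.coeff q n) hdd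
    simp [Polynomial.coeff_derivative] at this
    have hn : (0:ℝ) ≤ (n:ℝ) := Nat.cast_nonneg n
    rcases this with (h | h) | h
    · simpa [show n + 1 + 1 = n + 2 by omega] using h
    · exact absurd h (by intro hc; linarith)
    · exact absurd h (by intro hc; linarith)
  have hc := Polynomial.eq_X_add_C_of_degree_le_one (Polynomial.degree_le_of_natDegree_le hdeg)
  rw [hc] at h0 hbv ⊢
  simp at h0
  simp [h0] at hbv
  rcases hbv with h | h
  · simp [h, h0]
  · exact absurd h (ne_of_gt hb)

/-- Uniqueness of polynomial solutions of the Dirichlet problem for the homogeneous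
Tricomi equation in the strip `0 < y < b`. Here variable `0` is `x` and
variable `1` is `y`; `pderiv` is the formal partial derivative. -/
theorem tricomi_polynomial_uniqueness_elliptic (b : ℝ) (hb : 0 < b)
    (P : MvPolynomial (Fin 2) ℝ)
    (hT : ∀ x y : ℝ,
      y * eval ![x, y] (pderiv 0 (pderiv 0 P)) + eval ![x, y] (pderiv 1 (pderiv 1 P)) = 0)
    (hbot : ∀ x : ℝ, eval ![x, 0] P = 0)
    (htop : ∀ x : ℝ, eval ![x, b] P = 0) :
    P = 0 := by
  have hvec : ∀ g : Fin 2 → ℝ, ![g 0, g 1] = g := by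
    intro g; funext i; fin_cases i <;> simp
  -- the PDE as a polynomial identity
  have hZ : (X 1 : MvPolynomial (Fin 2) ℝ) * pderiv 0 (pderiv 0 P)
      + pderiv 1 (pderiv 1 P) = 0 := by
    apply MvPolynomial.funext
    intro g
    have := hT (g 0) (g 1)
    rw [hvec g] at this
    simpa using this
  set Q := tricomiPhi P with hQ
  -- boundary conditions on coefficients
  have hb0 : ∀ k, (Q.coeff k).eval 0 = 0 := by
    intro k
    have hmap : Polynomial.map (Polynomial.evalRingHom 0) Q = 0 := by
      apply Polynomial.funext
      intro x
      rw [hQ, tricomiPhi_eval]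
      simpa using hbot x
    have := congrArg (fun q => Polynomial.coeff q k) hmap
    simpa using this
  have hb1 : ∀ k, (Q.coeff k).eval b = 0 := by
    intro k
    have hmap : Polynomial.map (Polynomial.evalRingHom b) Q = 0 := by
      apply Polynomial.funext
      intro x
      rw [hQ, tricomiPhi_eval]
      simpa using htop x
    have := congrArg (fun q => Polynomial.coeff q k) hmap
    simpa using this
  -- the PDE on coefficients
  have hpde : ∀ k, Q.coeff (k + 2) = 0 →
      Polynomial.derivative (Polynomial.derivative (Q.coeff k)) = 0 := by
    intro k hk2
    have h1 := congrArg (fun p => (tricomiPhi p).coeff k) hZ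
    simp only [map_add, map_mul, map_zero, Polynomial.coeff_zero] at h1
    have hX1 : tricomiPhi (X 1 : MvPolynomial (Fin 2) ℝ) = Polynomial.C Polynomial.X := by
      simp [tricomiPhi]
    have hk2' : Q.coeff (k + 1 + 1) = 0 := by rwa [show k + 1 + 1 = k + 2 by omega]
    rw [hX1, tricomiPhi_pderiv0, tricomiPhi_pderiv0, ← hQ, Polynomial.coeff_add,
      tricomiPhi_pderiv1_coeff, tricomiPhi_pderiv1_coeff, ← hQ,
      Polynomial.coeff_C_mul, Polynomial.coeff_derivative, Polynomial.coeff_derivative,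
      hk2'] at h1
    simpa using h1
  -- downward induction: all coefficients vanish
  have hcoeff : ∀ m k, Q.natDegree < k + m → Q.coeff k = 0 := by
    intro m
    induction m with
    | zero => intro k hk; exact Polynomial.coeff_eq_zero_of_natDegree_lt (by omega)
    | succ m ih =>
      intro k hk
      have h2 : Q.coeff (k + 2) = 0 := ih (k + 2) (by omega)
      exact tricomi_line_zero b hb _ (hpde k h2) (hb0 k) (hb1 k)
  have hQ0 : Q = 0 :=
    Polynomial.ext fun k => by simpa using hcoeff (Q.natDegree + 1) k (by omega)
  apply MvPolynomial.funext
  intro g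
  have := tricomiPhi_eval (g 0) (g 1) P
  rw [hvec g, ← hQ, hQ0] at this
  simpa using this.symm
end

section
/- Let a > 0, μ > 0, and c₁, c₂ ∈ ℝ. If Ai(−μa)·Bi(μa) − Ai(μa)·Bi(−μa) = 0, then the function w(x,y) = (c₁·sin(μ^{3/2}x) + c₂·cos(μ^{3/2}x))·(Bi(μy)·Ai(−μa) − Ai(μy)·Bi(−μa)) satisfies y·w_xx + w_yy = 0 on ℝ², and w(x,−a) = 0 and w(x,a) = 0 for all x. -/
lemma diff_deriv_of_top (f : ℝ → ℝ) (hf : ContDiff ℝ ⊤ f) : Differentiable ℝ (deriv f) := by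
  have h1 : ContDiff ℝ ((⊤:ℕ∞) : WithTop ℕ∞) f := hf.of_le le_top
  exact (contDiff_infty_iff_deriv.mp h1).2.differentiable (by simp)

lemma d2_comp (f : ℝ → ℝ) (hf : ContDiff ℝ ⊤ f) (μ y : ℝ) :
    deriv (deriv (fun y => f (μ * y))) y = μ ^ 2 * deriv (deriv f) (μ * y) := by
  have h1 : ∀ t : ℝ, HasDerivAt (fun y => f (μ * y)) (deriv f (μ * t) * μ) t := by
    intro t
    simpa [Function.comp_def] using ((hf.differentiable (by simp) (μ * t)).hasDerivAt.comp t
      ((hasDerivAt_id t).const_mul μ))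
  have e1 : deriv (fun y => f (μ * y)) = fun t => deriv f (μ * t) * μ :=
    funext fun t => (h1 t).deriv
  rw [e1]
  have h2 : HasDerivAt (fun t : ℝ => deriv f (μ * t) * μ)
      (deriv (deriv f) (μ * y) * μ * μ) y := by
    simpa [mul_assoc] using (((diff_deriv_of_top f hf (μ * y)).hasDerivAt.comp y
      ((hasDerivAt_id y).const_mul μ))).mul_const μ
  rw [h2.deriv]; ring

lemma d2_lin (f g : ℝ → ℝ) (hf : ContDiff ℝ ⊤ f) (hg : ContDiff ℝ ⊤ g) (A B t : ℝ) :
    deriv (deriv (fun t => A * f t + B * g t)) t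
      = A * deriv (deriv f) t + B * deriv (deriv g) t := by
  have e1 : deriv (fun t => A * f t + B * g t) = fun t => A * deriv f t + B * deriv g t :=
    funext fun s => (((hf.differentiable (by simp) s).hasDerivAt.const_mul A).add
      ((hg.differentiable (by simp) s).hasDerivAt.const_mul B)).deriv
  rw [e1]
  exact (((diff_deriv_of_top f hf t).hasDerivAt.const_mul A).add
    ((diff_deriv_of_top g hg t).hasDerivAt.const_mul B)).deriv

lemma d2_sin (t : ℝ) : deriv (deriv Real.sin) t = -Real.sin t := by
  rw [Real.deriv_sin, Real.deriv_cos]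

lemma d2_cos (t : ℝ) : deriv (deriv Real.cos) t = -Real.cos t := by
  rw [Real.deriv_cos']
  have : deriv (fun x => -Real.sin x) t = -deriv Real.sin t := deriv.neg
  rw [this, Real.deriv_sin]


/-- Nonuniqueness of the Dirichlet problem in the mixed strip `-a < y < a`:
if `μ > 0` is a root of `Ai(-μa)·Bi(μa) - Ai(μa)·Bi(-μa) = 0`, then
`w(x,y) = (c₁ sin(μ^{3/2} x) + c₂ cos(μ^{3/2} x))·(Bi(μy)Ai(-μa) - Ai(μy)Bi(-μa))`
solves the homogeneous Tricomi equation with zero boundary data.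
`Ai` and `Bi` denote the Airy functions, which are smooth solutions of `f'' = t·f`. -/
theorem tricomi_nonuniqueness_mixed
    (Ai Bi : ℝ → ℝ)
    (hAiSmooth : ContDiff ℝ ⊤ Ai) (hBiSmooth : ContDiff ℝ ⊤ Bi)
    (hAi : ∀ t : ℝ, deriv (deriv Ai) t = t * Ai t)
    (hBi : ∀ t : ℝ, deriv (deriv Bi) t = t * Bi t)
    (a μ c₁ c₂ : ℝ) (ha : 0 < a) (hμ : 0 < μ)
    (hroot : Ai (-μ * a) * Bi (μ * a) - Ai (μ * a) * Bi (-μ * a) = 0)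
    (w : ℝ → ℝ → ℝ)
    (hw : ∀ x y : ℝ, w x y =
      (c₁ * Real.sin (μ ^ ((3:ℝ)/2) * x) + c₂ * Real.cos (μ ^ ((3:ℝ)/2) * x)) *
        (Bi (μ * y) * Ai (-μ * a) - Ai (μ * y) * Bi (-μ * a))) :
    (∀ x y : ℝ,
      y * deriv (deriv (fun x' => w x' y)) x + deriv (deriv (fun y' => w x y')) y = 0)
    ∧ (∀ x : ℝ, w x (-a) = 0) ∧ (∀ x : ℝ, w x a = 0) := by
  have hk2 : (μ ^ ((3:ℝ)/2)) ^ 2 = μ ^ 3 := by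
    rw [← Real.rpow_natCast (μ ^ ((3:ℝ)/2)) 2, ← Real.rpow_mul hμ.le,
      ← Real.rpow_natCast μ 3]
    norm_num
  set k : ℝ := μ ^ ((3:ℝ)/2) with hk
  set A : ℝ := Ai (-μ * a) with hA
  set B : ℝ := Bi (-μ * a) with hB
  refine ⟨fun x y => ?_, fun x => ?_, fun x => ?_⟩
  · -- PDE
    have ex : (fun x' => w x' y) = fun x' =>
        (fun t => (c₁ * (Bi (μ * y) * A - Ai (μ * y) * B)) * Real.sin t
          + (c₂ * (Bi (μ * y) * A - Ai (μ * y) * B)) * Real.cos t) (k * x') := by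
      funext x'; rw [hw]; ring
    have hFx : ContDiff ℝ ⊤ (fun t => (c₁ * (Bi (μ * y) * A - Ai (μ * y) * B)) * Real.sin t
          + (c₂ * (Bi (μ * y) * A - Ai (μ * y) * B)) * Real.cos t) :=
      ((contDiff_const.mul Real.contDiff_sin).add (contDiff_const.mul Real.contDiff_cos))
    have hdx : deriv (deriv (fun x' => w x' y)) x
        = k ^ 2 * ((c₁ * (Bi (μ * y) * A - Ai (μ * y) * B)) * (-Real.sin (k * x))
            + (c₂ * (Bi (μ * y) * A - Ai (μ * y) * B)) * (-Real.cos (k * x))) := by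
      rw [ex, d2_comp _ hFx k x,
        d2_lin _ _ Real.contDiff_sin Real.contDiff_cos, d2_sin, d2_cos]
    have ey : (fun y' => w x y') = fun y' =>
        (fun t => ((c₁ * Real.sin (k * x) + c₂ * Real.cos (k * x)) * A) * Bi t
          + (-((c₁ * Real.sin (k * x) + c₂ * Real.cos (k * x)) * B)) * Ai t) (μ * y') := by
      funext y'; rw [hw]; ring
    have hFy : ContDiff ℝ ⊤ (fun t =>
        ((c₁ * Real.sin (k * x) + c₂ * Real.cos (k * x)) * A) * Bi t
          + (-((c₁ * Real.sin (k * x) + c₂ * Real.cos (k * x)) * B)) * Ai t) :=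
      (contDiff_const.mul hBiSmooth).add (contDiff_const.mul hAiSmooth)
    have hdy : deriv (deriv (fun y' => w x y')) y
        = μ ^ 2 * (((c₁ * Real.sin (k * x) + c₂ * Real.cos (k * x)) * A) * ((μ * y) * Bi (μ * y))
            + (-((c₁ * Real.sin (k * x) + c₂ * Real.cos (k * x)) * B)) * ((μ * y) * Ai (μ * y))) := by
      rw [ey, d2_comp _ hFy μ y, d2_lin _ _ hBiSmooth hAiSmooth, hAi, hBi]
    rw [hdx, hdy, hk2]; ring
  · rw [hw]
    have h1 : μ * -a = -μ * a := by ring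
    rw [h1, ← hA, ← hB]
    ring
  · rw [hw]
    have hC : Bi (μ * a) * A - Ai (μ * a) * B = 0 := by
      rw [hA, hB]; linarith [hroot]
    rw [hC, mul_zero]
end
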